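/- Let I ⊆ S = ℂ[α₁,…,αₙ] be an ideal such that Q = S/I is a finite-dimensional ℂ-vector space, Q is local with maximal ideal m equal to the image of (α₁,…,αₙ) (equivalently, each αᵢ is nilpotent modulo I), and the annihilator {a ∈ Q : a·m = 0} of m in Q is a one-dimensional ℂ-vector space. Then there exists a polynomial F ∈ ℂ[x₁,…,xₙ] with I = Ann(F), i.e., Q is the apolar algebra of F. -/

import Mathlib

noncomputable section

open MvPolynomial

namespace Apolarity

variable {n : ℕ}

/-- Partial derivatives commute. -/
lemma pderiv_comm {σ : Type*} {R : Type*} [CommSemiring R] (i j : σ)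
    (p : MvPolynomial σ R) :
    MvPolynomial.pderiv i (MvPolynomial.pderiv j p) =
      MvPolynomial.pderiv j (MvPolynomial.pderiv i p) := by
  classical
  induction p using MvPolynomial.induction_on' with
  | monomial s a =>
      simp only [pderiv_monomial]
      rcases eq_or_ne i j with rfl | hij
      · rfl
      · rw [tsub_right_comm]
        congr 1
        rw [Finsupp.tsub_apply, Finsupp.tsub_apply, Finsupp.single_eq_of_ne hij,
          Finsupp.single_eq_of_ne (Ne.symm hij)]
        simp only [Nat.sub_zero]
        ring
  | add p q hp hq => simp [hp, hq]

/-- The set of partial-derivative operators on `P = ℂ[x₁,…,xₙ]`. -/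
def pdSet (n : ℕ) : Set (Module.End ℂ (MvPolynomial (Fin n) ℂ)) :=
  Set.range fun i : Fin n => (MvPolynomial.pderiv i).toLinearMap

lemma pdSet_comm : ∀ a ∈ pdSet n, ∀ b ∈ pdSet n, a * b = b * a := by
  rintro _ ⟨i, rfl⟩ _ ⟨j, rfl⟩
  refine LinearMap.ext fun p => ?_
  simp only [Module.End.mul_apply]
  exact pderiv_comm i j p

/-- The algebra map `S = ℂ[α₁,…,αₙ] → End_ℂ(P)` sending `αᵢ` to `∂/∂xᵢ`.
`D n σ F` is the action `σ∘F` of `σ ∈ S` on `F ∈ P = ℂ[x₁,…,xₙ]`. -/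
def D (n : ℕ) : MvPolynomial (Fin n) ℂ →ₐ[ℂ] Module.End ℂ (MvPolynomial (Fin n) ℂ) :=
  letI : CommSemiring (Algebra.adjoin ℂ (pdSet n)) :=
    Algebra.adjoinCommSemiringOfComm ℂ pdSet_comm
  ((Algebra.adjoin ℂ (pdSet n)).val).comp
    (MvPolynomial.aeval fun i : Fin n =>
      (⟨(MvPolynomial.pderiv i).toLinearMap,
        Algebra.subset_adjoin (Set.mem_range_self i)⟩ : Algebra.adjoin ℂ (pdSet n)))

@[simp] lemma D_X (i : Fin n) (F : MvPolynomial (Fin n) ℂ) :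
    D n (X i) F = MvPolynomial.pderiv i F := by
  simp [D]

/-- The apolar ideal `Ann(F) = {σ ∈ S : σ∘F = 0}`. -/
def annIdeal (F : MvPolynomial (Fin n) ℂ) : Ideal (MvPolynomial (Fin n) ℂ) where
  carrier := {σ | D n σ F = 0}
  zero_mem' := by simp
  add_mem' := by
    intro a b ha hb
    simp only [Set.mem_setOf_eq, map_add, LinearMap.add_apply] at *
    rw [ha, hb, add_zero]
  smul_mem' := by
    intro c x hx
    simp only [Set.mem_setOf_eq, smul_eq_mul, map_mul, Module.End.mul_apply] at *
    rw [hx, map_zero]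

/-- The apolar algebra `Apolar(F) = S/Ann(F)`. -/
abbrev Apolar (F : MvPolynomial (Fin n) ℂ) := MvPolynomial (Fin n) ℂ ⧸ annIdeal F

/-- The `ℂ`-linear map `σ ↦ σ∘F`. -/
def applyAt (F : MvPolynomial (Fin n) ℂ) :
    MvPolynomial (Fin n) ℂ →ₗ[ℂ] MvPolynomial (Fin n) ℂ where
  toFun σ := D n σ F
  map_add' a b := by simp only [map_add, LinearMap.add_apply]
  map_smul' c a := by simp only [map_smul, LinearMap.smul_apply, RingHom.id_apply]

/-- `S_r∘F`, the image of the degree-`r` part of `S` acting on `F`. -/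
def SrF (r : ℕ) (F : MvPolynomial (Fin n) ℂ) : Submodule ℂ (MvPolynomial (Fin n) ℂ) :=
  (MvPolynomial.homogeneousSubmodule (Fin n) ℂ r).map (applyAt F)

/-- The perpendicular space of an ideal `J ⊆ S`:
polynomials killed by every element of `J`. -/
def perp (J : Ideal (MvPolynomial (Fin n) ℂ)) : Submodule ℂ (MvPolynomial (Fin n) ℂ) :=
  ⨅ σ ∈ J, LinearMap.ker (D n σ)

lemma mem_perp {J : Ideal (MvPolynomial (Fin n) ℂ)} {G : MvPolynomial (Fin n) ℂ} :
    G ∈ perp J ↔ ∀ σ ∈ J, D n σ G = 0 := by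
  simp [perp, Submodule.mem_iInf, LinearMap.mem_ker]

/-- The image of the ideal `(α₁,…,αₙ)` in `Q = S/I`. -/
def mQuot (I : Ideal (MvPolynomial (Fin n) ℂ)) : Ideal (MvPolynomial (Fin n) ℂ ⧸ I) :=
  Ideal.map (Ideal.Quotient.mk I)
    (Ideal.span (Set.range (X : Fin n → MvPolynomial (Fin n) ℂ)))

/-- The annihilator `{a ∈ Q : a·m = 0}` of `m` in `Q = S/I`, as a `ℂ`-subspace. -/
def socleQuot (I : Ideal (MvPolynomial (Fin n) ℂ)) :
    Submodule ℂ (MvPolynomial (Fin n) ℂ ⧸ I) where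
  carrier := {a | ∀ b ∈ mQuot I, a * b = 0}
  zero_mem' := fun b _ => zero_mul b
  add_mem' := by
    intro a a' ha ha' b hb
    rw [add_mul, ha b hb, ha' b hb, add_zero]
  smul_mem' := by
    intro c a ha b hb
    rw [smul_mul_assoc, ha b hb, smul_zero]

lemma mem_annIdeal {F σ : MvPolynomial (Fin n) ℂ} :
    σ ∈ annIdeal F ↔ D n σ F = 0 := Iff.rfl

lemma D_X_eq (i : Fin n) : D n (X i) = (MvPolynomial.pderiv i).toLinearMap :=
  LinearMap.ext fun F => D_X i F

lemma pd_apply (i : Fin n) (p : MvPolynomial (Fin n) ℂ) :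
    (MvPolynomial.pderiv (R := ℂ) i).toLinearMap p = MvPolynomial.pderiv i p := rfl

lemma pd_pow_monomial (i : Fin n) (b : ℕ) (e : Fin n →₀ ℕ) (c : ℂ) :
    ((MvPolynomial.pderiv (R := ℂ) i).toLinearMap ^ b) (monomial e c) =
      monomial (e - Finsupp.single i b) (c * ((e i).descFactorial b : ℂ)) := by
  induction b with
  | zero => simp
  | succ b ih =>
      rw [pow_succ', Module.End.mul_apply, ih, pd_apply, pderiv_monomial]
      congr 1
      · rw [tsub_tsub, ← Finsupp.single_add]
      · have h1 : (e - Finsupp.single i b) i = e i - b := by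
          rw [Finsupp.tsub_apply, Finsupp.single_eq_same]
        rw [h1, Nat.descFactorial_succ, Nat.cast_mul]
        ring

lemma D_monomial_monomial (d e : Fin n →₀ ℕ) (c : ℂ) :
    D n (monomial d 1) (monomial e c) =
      monomial (e - d) (c * ∏ i, ((e i).descFactorial (d i) : ℂ)) := by
  classical
  induction d using Finsupp.induction with
  | zero => simp
  | single_add i b f hif hb ih =>
      have h1 : (monomial (Finsupp.single i b + f) (1 : ℂ)) =
          X i ^ b * monomial f 1 := by
        rw [X_pow_eq_monomial, monomial_mul, one_mul]
      rw [h1, map_mul, Module.End.mul_apply, ih, map_pow, D_X_eq, pd_pow_monomial]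
      have hfi : f i = 0 := Finsupp.notMem_support_iff.mp hif
      congr 1
      · rw [tsub_tsub, add_comm]
      · have h2 : (e - f) i = e i := by
          rw [Finsupp.tsub_apply, hfi, Nat.sub_zero]
        rw [h2,
          Fintype.prod_eq_mul_prod_compl i
            (fun j => ((e j).descFactorial ((Finsupp.single i b + f) j) : ℂ)),
          Fintype.prod_eq_mul_prod_compl i
            (fun j => ((e j).descFactorial (f j) : ℂ))]
        have h3 : ∀ j ∈ ({i}ᶜ : Finset (Fin n)),
            ((e j).descFactorial ((Finsupp.single i b + f) j) : ℂ) =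
              ((e j).descFactorial (f j) : ℂ) := by
          intro j hj
          have hj' : j ≠ i := by simpa using hj
          rw [Finsupp.add_apply, Finsupp.single_eq_of_ne hj', zero_add]
        rw [Finset.prod_congr rfl h3]
        have h4 : (Finsupp.single i b + f) i = b := by
          rw [Finsupp.add_apply, Finsupp.single_eq_same, hfi, add_zero]
        rw [h4, hfi]
        simp only [Nat.descFactorial_zero, Nat.cast_one, one_mul]
        ring

/-- The factorial normalizing constant `d! = ∏ᵢ (dᵢ)!` as a complex number. -/
def dfac (d : Fin n →₀ ℕ) : ℂ := ∏ i, ((d i).factorial : ℂ)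

lemma dfac_ne_zero (d : Fin n →₀ ℕ) : dfac d ≠ 0 := by
  rw [dfac]
  apply Finset.prod_ne_zero_iff.mpr
  intro i _
  exact_mod_cast (d i).factorial_ne_zero

lemma constantCoeff_D_monomial (d : Fin n →₀ ℕ) (G : MvPolynomial (Fin n) ℂ) :
    constantCoeff (D n (monomial d 1) G) = dfac d * coeff d G := by
  classical
  induction G using MvPolynomial.induction_on' with
  | monomial e c =>
      rw [D_monomial_monomial, constantCoeff_monomial, coeff_monomial]
      rcases eq_or_ne e d with rfl | hed
      · rw [if_pos (tsub_self e), if_pos rfl, dfac]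
        simp only [Nat.descFactorial_self]
        ring
      · rw [if_neg hed, mul_zero]
        by_cases hle : e - d = 0
        · rw [if_pos hle]
          obtain ⟨i, hi⟩ : ∃ i, e i ≠ d i := by
            by_contra h
            push_neg at h
            exact hed (Finsupp.ext h)
          have hlt : e i < d i := by
            have : (e - d) i = 0 := by rw [hle]; rfl
            rw [Finsupp.tsub_apply] at this
            omega
          have : ((e i).descFactorial (d i) : ℂ) = 0 := by
            rw [Nat.descFactorial_eq_zero_iff_lt.mpr hlt, Nat.cast_zero]
          rw [Finset.prod_eq_zero (Finset.mem_univ i) this, mul_zero]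
        · rw [if_neg hle]
  | add p q hp hq =>
      simp only [map_add, LinearMap.add_apply, coeff_add, hp, hq]
      ring

lemma eq_zero_of_forall_constantCoeff_D {G : MvPolynomial (Fin n) ℂ}
    (h : ∀ d, constantCoeff (D n (monomial d 1) G) = 0) : G = 0 := by
  ext d
  have hd := h d
  rw [constantCoeff_D_monomial] at hd
  rcases mul_eq_zero.mp hd with h' | h'
  · exact absurd h' (dfac_ne_zero d)
  · simpa using h'

lemma monomial_mem_pow (e : Fin n →₀ ℕ) :
    monomial e (1 : ℂ) ∈
      (Ideal.span (Set.range (X : Fin n → MvPolynomial (Fin n) ℂ))) ^ (∑ i, e i) := by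
  classical
  induction e using Finsupp.induction with
  | zero =>
      simp only [Finsupp.coe_zero, Pi.zero_apply, Finset.sum_const_zero, pow_zero,
        Ideal.one_eq_top]
      exact Submodule.mem_top
  | single_add i b f hif hb ih =>
      have h1 : (monomial (Finsupp.single i b + f) (1 : ℂ)) =
          X i ^ b * monomial f 1 := by
        rw [X_pow_eq_monomial, monomial_mul, one_mul]
      have hsum : ∑ j, (Finsupp.single i b + f) j = b + ∑ j, f j := by
        simp only [Finsupp.add_apply, Finset.sum_add_distrib]
        congr 1
        simp [Finsupp.single_apply]
      rw [h1, hsum, pow_add]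
      exact Ideal.mul_mem_mul (Ideal.pow_mem_pow (Ideal.subset_span (Set.mem_range_self i)) b) ih

set_option synthInstance.maxHeartbeats 1000000 in
lemma mk_monomial_eq_zero {I : Ideal (MvPolynomial (Fin n) ℂ)} {N : ℕ}
    (hN : mQuot I ^ N = ⊥) (e : Fin n →₀ ℕ) (he : N ≤ ∑ i, e i) :
    Ideal.Quotient.mk I (monomial e 1) = 0 := by
  have h2 : Ideal.Quotient.mk I (monomial e 1) ∈ mQuot I ^ (∑ i, e i) := by
    rw [mQuot, ← Ideal.map_pow]
    exact Ideal.mem_map_of_mem _ (monomial_mem_pow e)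
  have h3 := Ideal.pow_le_pow_right he h2
  rw [hN] at h3
  simpa using h3

set_option maxHeartbeats 1000000
set_option synthInstance.maxHeartbeats 1000000

/-- Macaulay's theorem, converse direction. If `I ⊆ S = ℂ[α₁,…,αₙ]` is
an ideal such that `Q = S/I` is finite-dimensional over `ℂ`, `Q` is local with maximal
ideal the image `m` of `(α₁,…,αₙ)`, and the annihilator of `m` in `Q` is one-dimensional,
then `I = Ann(F)` for some polynomial `F ∈ ℂ[x₁,…,xₙ]`, i.e. `Q` is the apolar algebra
of `F`. -/
theorem exists_inverse_system_of_local_artinian_gorenstein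
    {n : ℕ} (I : Ideal (MvPolynomial (Fin n) ℂ))
    (hfin : FiniteDimensional ℂ (MvPolynomial (Fin n) ℂ ⧸ I))
    (hmax : (mQuot I).IsMaximal)
    (hloc : ∀ J : Ideal (MvPolynomial (Fin n) ℂ ⧸ I), J.IsMaximal → J = mQuot I)
    (hsoc : Module.finrank ℂ (socleQuot I) = 1) :
    ∃ F : MvPolynomial (Fin n) ℂ, I = annIdeal F := by
  classical
  -- `Q = S/I` is an Artinian ring
  have hart : IsArtinianRing (MvPolynomial (Fin n) ℂ ⧸ I) :=
    isArtinian_of_tower ℂ inferInstance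
  -- the Jacobson radical of `Q` is `m`
  have hjac : (⊥ : Ideal (MvPolynomial (Fin n) ℂ ⧸ I)).jacobson = mQuot I := by
    apply le_antisymm
    · exact sInf_le ⟨bot_le, hmax⟩
    · exact le_sInf (by rintro J ⟨-, hJ⟩; exact (hloc J hJ).ge)
  -- hence `m` is nilpotent
  obtain ⟨N, hN⟩ := IsArtinianRing.isNilpotent_jacobson_bot
    (R := MvPolynomial (Fin n) ℂ ⧸ I)
  rw [hjac] at hN
  have hNb : mQuot I ^ N = ⊥ := hN
  -- pick a nonzero socle element `s` and a functional `φ` with `φ s ≠ 0`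
  have hsocne : socleQuot I ≠ ⊥ := by
    intro h
    rw [h] at hsoc
    simp at hsoc
  obtain ⟨s, hs, hs0⟩ := Submodule.exists_mem_ne_zero_of_ne_bot hsocne
  obtain ⟨φ, hφ⟩ : ∃ φ : Module.Dual ℂ (MvPolynomial (Fin n) ℂ ⧸ I), φ s ≠ 0 := by
    by_contra h
    push_neg at h
    exact hs0 ((Module.forall_dual_apply_eq_zero_iff ℂ s).mp h)
  set mk : MvPolynomial (Fin n) ℂ →+* MvPolynomial (Fin n) ℂ ⧸ I :=
    Ideal.Quotient.mk I with hmk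
  -- the polynomial `F`
  set b0 : Fin n →₀ ℕ := Finsupp.equivFunOnFinite.symm fun _ => N with hb0
  set F : MvPolynomial (Fin n) ℂ :=
    ∑ e ∈ Finset.Iic b0, (φ (mk (monomial e 1)) / dfac e) • monomial e 1 with hF
  have hcoeff : ∀ d, coeff d F =
      if d ≤ b0 then φ (mk (monomial d 1)) / dfac d else 0 := by
    intro d
    rw [hF, MvPolynomial.coeff_sum]
    have h1 : ∀ e ∈ Finset.Iic b0,
        coeff d ((φ (mk (monomial e 1)) / dfac e) • monomial e 1)
          = if e = d then φ (mk (monomial e 1)) / dfac e else 0 := by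
      intro e _
      rw [coeff_smul, coeff_monomial]
      simp [mul_ite]
    rw [Finset.sum_congr rfl h1,
      Finset.sum_ite_eq' (Finset.Iic b0) d
        (fun e => φ (mk (monomial e 1)) / dfac e)]
    simp [Finset.mem_Iic]
  -- the key evaluation identity, first for monomials of coefficient 1
  have hL1m : ∀ d : Fin n →₀ ℕ,
      constantCoeff (D n (monomial d 1) F) = φ (mk (monomial d 1)) := by
    intro d
    rw [constantCoeff_D_monomial, hcoeff d]
    by_cases hd : d ≤ b0
    · rw [if_pos hd, mul_comm, div_mul_cancel₀ _ (dfac_ne_zero d)]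
    · rw [if_neg hd, mul_zero]
      obtain ⟨i, hi⟩ : ∃ i, N < d i := by
        by_contra h
        push_neg at h
        refine hd (Finsupp.le_def.mpr fun i => ?_)
        simpa [hb0] using h i
      have hdeg : N ≤ ∑ j, d j :=
        le_trans hi.le
          (Finset.single_le_sum (fun j _ => Nat.zero_le _) (Finset.mem_univ i))
      rw [mk_monomial_eq_zero hNb d hdeg, map_zero]
  -- the key evaluation identity in general
  have hL1 : ∀ ρ, constantCoeff (D n ρ F) = φ (mk ρ) := by
    intro ρ
    induction ρ using MvPolynomial.induction_on' with
    | monomial d c =>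
        have h1 : (monomial d c : MvPolynomial (Fin n) ℂ) = c • monomial d 1 := by
          rw [smul_monomial, smul_eq_mul, mul_one]
        have h2 : mk (c • (monomial d 1 : MvPolynomial (Fin n) ℂ))
            = c • mk (monomial d 1) := by
          rw [hmk, ← Ideal.Quotient.mkₐ_eq_mk ℂ I]
          exact map_smul (Ideal.Quotient.mkₐ ℂ I) c _
        calc constantCoeff (D n (monomial d c) F)
            = c * constantCoeff (D n (monomial d 1) F) := by
              rw [h1, map_smul, LinearMap.smul_apply, MvPolynomial.smul_eq_C_mul,
                map_mul, constantCoeff_C]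
          _ = c * φ (mk (monomial d 1)) := by rw [hL1m d]
          _ = φ (mk (monomial d c)) := by
              rw [h1, h2, map_smul, smul_eq_mul]
    | add p q hp hq =>
        rw [map_add, LinearMap.add_apply, map_add, map_add, map_add, hp, hq]
  refine ⟨F, ?_⟩
  ext σ
  rw [mem_annIdeal]
  constructor
  · -- `I ⊆ Ann F`
    intro hσ
    apply eq_zero_of_forall_constantCoeff_D
    intro d
    have h1 : D n (monomial d 1) (D n σ F) = D n (monomial d 1 * σ) F := by
      rw [map_mul, Module.End.mul_apply]
    have h2 : mk σ = 0 := Ideal.Quotient.eq_zero_iff_mem.mpr hσ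
    rw [h1, hL1, map_mul, h2, mul_zero, map_zero]
  · -- `Ann F ⊆ I`
    intro hσ0
    have hall : ∀ b : MvPolynomial (Fin n) ℂ ⧸ I, φ (b * mk σ) = 0 := by
      intro b
      obtain ⟨τ, rfl⟩ := Ideal.Quotient.mk_surjective b
      have h1 : φ (mk (τ * σ)) = 0 := by
        rw [← hL1, map_mul, Module.End.mul_apply, hσ0, map_zero, map_zero]
      simpa [map_mul] using h1
    by_contra hmem
    have ha : mk σ ≠ 0 := fun h => hmem (Ideal.Quotient.eq_zero_iff_mem.mp h)
    set J : Ideal (MvPolynomial (Fin n) ℂ ⧸ I) := Ideal.span {mk σ} with hJ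
    have hJne : J ≠ ⊥ := by
      simpa [hJ, Ideal.span_singleton_eq_bot] using ha
    set P : ℕ → Prop := fun k => mQuot I ^ k * J ≠ ⊥ with hP
    have h0 : P 0 := by simpa [hP] using hJne
    have hNP : ¬ P N := by simp [hP, hNb]
    set k := Nat.findGreatest P N with hk
    have hk1 : P k := Nat.findGreatest_spec (Nat.zero_le N) h0
    have hklt : k < N := by
      rcases lt_or_eq_of_le (Nat.findGreatest_le (P := P) N) with h | h
      · exact h
      · exact absurd (h ▸ hk1) hNP
    have hk2 : mQuot I ^ (k + 1) * J = ⊥ := by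
      have := Nat.findGreatest_is_greatest (P := P) (Nat.lt_succ_self k) hklt
      simpa [hP] using this
    obtain ⟨c, hc, hc0⟩ := Submodule.exists_mem_ne_zero_of_ne_bot hk1
    have hcs : c ∈ socleQuot I := by
      intro b hb
      have h1 : c * b ∈ (mQuot I ^ k * J) * mQuot I := Ideal.mul_mem_mul hc hb
      have h2 : (mQuot I ^ k * J) * mQuot I = mQuot I ^ (k + 1) * J := by
        rw [Submodule.pow_succ, Ideal.mul_assoc, Ideal.mul_comm J, ← Ideal.mul_assoc]
      rw [h2, hk2] at h1
      simpa using h1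
    have hcJ : c ∈ J := Ideal.mul_le_right hc
    obtain ⟨b, hb⟩ := Ideal.mem_span_singleton'.mp (hJ ▸ hcJ)
    have hφc : φ c = 0 := by rw [← hb]; exact hall b
    have hsne : (⟨s, hs⟩ : socleQuot I) ≠ 0 := by
      simpa [Submodule.mk_eq_zero] using hs0
    have hsp : Submodule.span ℂ {(⟨s, hs⟩ : socleQuot I)} = ⊤ :=
      (finrank_eq_one_iff_of_nonzero _ hsne).mp hsoc
    have hmem2 : (⟨c, hcs⟩ : socleQuot I) ∈
        Submodule.span ℂ {(⟨s, hs⟩ : socleQuot I)} := hsp ▸ Submodule.mem_top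
    obtain ⟨t, ht⟩ := Submodule.mem_span_singleton.mp hmem2
    have htc : t • s = c := congrArg Subtype.val ht
    have hts : t * φ s = 0 := by rw [← smul_eq_mul, ← map_smul, htc, hφc]
    rcases mul_eq_zero.mp hts with h | h
    · exact hc0 (by rw [← htc, h, zero_smul])
    · exact hφ h

end Apolarity
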